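/- For every n ≥ 1 and all a, b ∈ F_2^n, conjugation of the Hermitian Pauli matrix E(a,b) by the transversal T gate satisfies T^{⊗n} E(a,b) (T^{⊗n})† = 2^{−w_H(a)/2} · Σ_{y ⪯ a} (−1)^{b y^T} E(a, b ⊕ y), where the sum runs over all y ∈ F_2^n with supp(y) ⊆ supp(a) and ⊕ denotes addition in F_2^n. -/

import Mathlib

open Matrix BigOperators

section Binary

variable {ι : Type*} [Fintype ι] [DecidableEq ι]

/-- Hamming weight of a binary vector. -/
def wH (x : ι → ZMod 2) : ℕ := (Finset.univ.filter fun j => x j = 1).card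

/-- `supportLE y x` means `supp(y) ⊆ supp(x)`, i.e. `y ⪯ x`. -/
def supportLE (y x : ι → ZMod 2) : Prop := ∀ j, y j = 1 → x j = 1

instance (x : ι → ZMod 2) : DecidablePred (fun y : ι → ZMod 2 => supportLE y x) :=
  fun _ => inferInstanceAs (Decidable (∀ j, _ = 1 → x j = 1))

/-- The mod-2 inner product `x yᵀ = ∑ j, x j * y j`. -/
def binInner (x y : ι → ZMod 2) : ZMod 2 := ∑ j, x j * y j

/-- The dual code `C^⊥ = {y : x yᵀ = 0 for all x ∈ C}`. -/
def dualCode (C : Submodule (ZMod 2) (ι → ZMod 2)) : Submodule (ZMod 2) (ι → ZMod 2) where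
  carrier := { y | ∀ x ∈ C, binInner x y = 0 }
  add_mem' := by
    intro a b ha hb x hx
    have h : binInner x (a + b) = binInner x a + binInner x b := by
      simp [binInner, mul_add, Finset.sum_add_distrib]
    rw [h, ha x hx, hb x hx, add_zero]
  zero_mem' := by
    intro x hx
    simp [binInner]
  smul_mem' := by
    intro c a ha x hx
    have h : binInner x (c • a) = c * binInner x a := by
      simp only [binInner, Pi.smul_apply, smul_eq_mul, Finset.mul_sum]
      exact Finset.sum_congr rfl fun j _ => by ring
    rw [h, ha x hx, mul_zero]

/-- A CSS-T pair of binary linear codes: `C₂ ⊆ C₁`, every codeword of `C₂` has even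
weight, and for each `x ∈ C₂` there is a self-dual code in `C₁^⊥`, of dimension
`w_H(x)/2`, supported on `x`. -/
def CSST (C₁ C₂ : Submodule (ZMod 2) (ι → ZMod 2)) : Prop :=
  C₂ ≤ C₁ ∧
  (∀ x ∈ C₂, Even (wH x)) ∧
  (∀ x ∈ C₂, ∃ Cx : Submodule (ZMod 2) (ι → ZMod 2),
    Cx ≤ dualCode C₁ ∧
    2 * Module.finrank (ZMod 2) Cx = wH x ∧
    (∀ z ∈ Cx, supportLE z x) ∧
    (∀ y ∈ Cx, ∀ z ∈ Cx, binInner y z = 0))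

/-- A family of rows is triorthogonal if all pairs and triples of distinct rows have
even overlap. -/
def Triorthogonal {p : ℕ} (g : Fin p → ι → ZMod 2) : Prop :=
  (∀ a b : Fin p, a < b → Even (wH (g a * g b))) ∧
  (∀ a b c : Fin p, a < b → b < c → Even (wH (g a * g b * g c)))

end Binary

/-- Binary vectors of length `n`. -/
abbrev V (n : ℕ) := Fin n → ZMod 2

/-- The Hermitian `n`-qubit Pauli matrix
`E(a,b) = ⊗_j i^{a_j b_j} X^{a_j} Z^{b_j}`, written entrywise:
`E(a,b)[u,v] = i^{∑ a_j b_j} · 1[u = v ⊕ a] · (−1)^{∑ b_j v_j}`. -/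
def PauliE {n : ℕ} (a b : V n) : Matrix (V n) (V n) ℂ :=
  Matrix.of fun u v =>
    Complex.I ^ (∑ j, (a j).val * (b j).val) *
      (if u = v + a then 1 else 0) *
      (-1 : ℂ) ^ (∑ j, (b j).val * (v j).val)

/-- The transversal `T` gate `T^{⊗n}`, where `T = diag(1, e^{iπ/4})`; it is the diagonal
matrix whose entry at `v` is `e^{iπ w_H(v)/4}`. -/
noncomputable def transT (n : ℕ) : Matrix (V n) (V n) ℂ :=
  Matrix.diagonal fun v : V n => Complex.exp ((Real.pi : ℂ) * Complex.I / 4) ^ wH v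

/-- `ε` is a sign `±1`. -/
def IsSign (ε : ℂ) : Prop := ε = 1 ∨ ε = -1

/-- A stabilizer group on `n` qubits, given as the finite set of its elements:
each element is `±E(a,b)`, the set is closed under multiplication, abelian,
nonempty (hence contains the identity), and does not contain `−I`. -/
def IsStabilizer (n : ℕ) (S : Finset (Matrix (V n) (V n) ℂ)) : Prop :=
  S.Nonempty ∧
  (∀ g ∈ S, ∃ (ε : ℂ) (a b : V n), IsSign ε ∧ g = ε • PauliE a b) ∧
  (∀ g ∈ S, ∀ h ∈ S, g * h ∈ S) ∧
  (∀ g ∈ S, ∀ h ∈ S, g * h = h * g) ∧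
  (-1 : Matrix (V n) (V n) ℂ) ∉ S

/-- The code projector `Π_S = |S|⁻¹ ∑_{g ∈ S} g  (= 2^{−r} ∑_j ε_j E(a_j,b_j))`. -/
noncomputable def stabProj {n : ℕ} (S : Finset (Matrix (V n) (V n) ℂ)) :
    Matrix (V n) (V n) ℂ :=
  (S.card : ℂ)⁻¹ • ∑ g ∈ S, g

/-- For every `n ≥ 1` and all `a, b ∈ F₂ⁿ`,
`T^{⊗n} E(a,b) (T^{⊗n})† = 2^{−w_H(a)/2} ∑_{y ⪯ a} (−1)^{b yᵀ} E(a, b ⊕ y)`. -/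

lemma zsum' (f : ZMod 2 → ℂ) : ∑ x : ZMod 2, f x = f 0 + f 1 := by
  rw [show (Finset.univ : Finset (ZMod 2)) = {0,1} from by decide]
  rw [Finset.sum_insert (by decide), Finset.sum_singleton]

lemma wH_sum' {ι : Type*} [Fintype ι] [DecidableEq ι] (x : ι → ZMod 2) :
    wH x = ∑ j, (x j).val := by
  have hv : ∀ z : ZMod 2, z.val = if z = 1 then 1 else 0 := by decide
  rw [wH, Finset.card_eq_sum_ones, Finset.sum_filter]
  exact Finset.sum_congr rfl fun j _ => (hv (x j)).symm

lemma expc' : Complex.exp ((Real.pi : ℂ) * Complex.I / 4) =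
    (1 + Complex.I) / ((Real.sqrt 2 : ℝ) : ℂ) := by
  have h : (Real.pi : ℂ) * Complex.I / 4 = ((Real.pi/4 : ℝ) : ℂ) * Complex.I := by
    push_cast; ring
  rw [h, Complex.exp_mul_I]
  rw [← Complex.ofReal_cos, ← Complex.ofReal_sin, Real.cos_pi_div_four, Real.sin_pi_div_four]
  have hs : (Real.sqrt 2 : ℂ) ≠ 0 := by norm_cast; positivity
  have h2 : (Real.sqrt 2 : ℂ) * (Real.sqrt 2 : ℂ) = 2 := by
    norm_cast; exact Real.mul_self_sqrt (by norm_num)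
  field_simp
  push_cast
  linear_combination (1 + Complex.I) / 2 * h2

lemma coord' (α β υ : ZMod 2) :
    ((1+Complex.I)/((Real.sqrt 2:ℝ):ℂ)) ^ (υ+α).val * Complex.I ^ (α.val * β.val) *
      (-1:ℂ) ^ (β.val * υ.val) * ((1-Complex.I)/((Real.sqrt 2:ℝ):ℂ)) ^ υ.val
    = ((Real.sqrt 2:ℝ):ℂ)⁻¹ ^ α.val *
      ∑ y ∈ Finset.univ.filter (fun z : ZMod 2 => z = 1 → α = 1),
        ((-1:ℂ) ^ (β.val * y.val) * (Complex.I ^ (α.val * (β+y).val) * (-1:ℂ) ^ ((β+y).val * υ.val))) := by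
  have hs : (Real.sqrt 2 : ℂ) ≠ 0 := by norm_cast; positivity
  have h2 : (Real.sqrt 2 : ℂ) * (Real.sqrt 2 : ℂ) = 2 := by
    norm_cast; exact Real.mul_self_sqrt (by norm_num)
  have hx : ∀ x : ZMod 2, x = 0 ∨ x = 1 := by decide
  have e0 : ZMod.val (0 : ZMod 2) = 0 := rfl
  have e1 : ZMod.val (1 : ZMod 2) = 1 := rfl
  have e2 : ZMod.val (2 : ZMod 2) = 0 := rfl
  rw [Finset.sum_filter, zsum']
  rcases hx α with h | h <;> subst h <;>
    rcases hx β with h | h <;> subst h <;>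
      rcases hx υ with h | h <;> subst h <;>
  · norm_num [e0, e1, e2]
    try field_simp
    first
    | done
    | ring1
    | linear_combination h2
    | linear_combination -h2
    | linear_combination Complex.I_sq
    | linear_combination -Complex.I_sq
    | linear_combination h2 - Complex.I_sq
    | linear_combination h2 + Complex.I_sq
    | linear_combination -h2 - Complex.I_sq
    | linear_combination -h2 + Complex.I_sq
    | linear_combination 2*Complex.I_sq
    | linear_combination -2*Complex.I_sq
    | linear_combination Complex.I*h2 - Complex.I_sq
    | linear_combination Complex.I*h2 + Complex.I_sq
    | linear_combination (Real.sqrt 2:ℂ)*Complex.I_sq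
    | linear_combination -(Real.sqrt 2:ℂ)*Complex.I_sq

lemma filter_supportLE' {n : ℕ} (a : V n) :
    Finset.univ.filter (fun y : V n => supportLE y a) =
      Fintype.piFinset (fun j => Finset.univ.filter (fun z : ZMod 2 => z = 1 → a j = 1)) := by
  ext y
  rw [Finset.mem_filter]
  simp [supportLE, Fintype.mem_piFinset]

theorem transversalT_conj_pauli (n : ℕ) (hn : 1 ≤ n) (a b : V n) :
    transT n * PauliE a b * (transT n)ᴴ =
      (((Real.sqrt 2)⁻¹ ^ wH a : ℝ) : ℂ) •
        ∑ y ∈ Finset.univ.filter (fun y : V n => supportLE y a),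
          ((-1 : ℂ) ^ (∑ j, (b j).val * (y j).val)) • PauliE a (b + y) := by
  have hsc : starRingEnd ℂ ((1 + Complex.I) / ((Real.sqrt 2:ℝ):ℂ)) =
      (1 - Complex.I) / ((Real.sqrt 2:ℝ):ℂ) := by
    simp [map_div₀, Complex.conj_ofReal, sub_eq_add_neg]
  ext u v : 2
  rw [transT, expc', Matrix.diagonal_conjTranspose, Matrix.mul_diagonal, Matrix.diagonal_mul]
  rw [Matrix.smul_apply, Matrix.sum_apply]
  simp only [Matrix.smul_apply, PauliE, Matrix.of_apply, Pi.star_apply, smul_eq_mul]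
  by_cases h : u = v + a
  · subst h
    simp only [eq_self_iff_true, if_true, mul_one]
    rw [star_pow, Complex.star_def, hsc]
    rw [Complex.ofReal_pow, Complex.ofReal_inv]
    simp only [wH_sum', Pi.add_apply]
    simp only [← Finset.prod_pow_eq_pow_sum]
    simp only [← Finset.prod_mul_distrib]
    rw [filter_supportLE']
    rw [← Finset.prod_univ_sum (fun j => Finset.filter (fun z : ZMod 2 => z = 1 → a j = 1) Finset.univ) (fun j z => (-1:ℂ) ^ ((b j).val * z.val) * (Complex.I ^ ((a j).val * (b j + z).val) * (-1:ℂ) ^ ((b j + z).val * (v j).val)))]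
    rw [← Finset.prod_mul_distrib]
    exact Finset.prod_congr rfl fun j _ => by linear_combination coord' (a j) (b j) (v j)
  · simp [if_neg h]
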